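/- Let g, Z ∈ ℝᵐ with g ≠ 0, let n > 0, and set G = g + Z/√n. Assuming ‖Z‖/√n < ‖g‖ (so G ≠ 0), the projection of the unit vector G/‖G‖ onto g/‖g‖ satisfies ⟨G/‖G‖, g/‖g‖⟩ = 1 - ‖Z‖² sin²θ/(2n‖g‖²) + o(1/n) as n → ∞, where θ is the angle between Z and g. -/

import Mathlib

open RealInnerProductSpace Filter

lemma alg15 (a b s r t : ℝ) (hs : s ≠ 0) (ht : t ≠ 0) (hr : r ≠ 0)
    (hr2 : r ^ 2 = s ^ 2 + 2 * a * t + b * t ^ 2)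
    (hX : (s ^ 2 + a * t) / (r * s) + 1 ≠ 0) :
    (s ^ 2 + a * t) / (r * s) - (1 - ((b * s ^ 2 - a ^ 2) / s ^ 2) / (2 * (t ^ 2)⁻¹ * s ^ 2))
      = t ^ 2 * ((b * s ^ 2 - a ^ 2) *
          ((2 * s ^ 4)⁻¹ - (s ^ 2 * r ^ 2 * ((s ^ 2 + a * t) / (r * s) + 1))⁻¹)) := by
  have hb : b = (r ^ 2 - s ^ 2 - 2 * a * t) / t ^ 2 := by
    field_simp
    linarith [hr2]
  subst hb
  have hX' : s ^ 2 + a * t + r * s ≠ 0 := by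
    intro h
    apply hX
    field_simp
    linarith
  have hY : s ^ 2 * a * t * r ^ 2 + s ^ 3 * r ^ 3 + s ^ 4 * r ^ 2 ≠ 0 := by
    have h : s ^ 2 * a * t * r ^ 2 + s ^ 3 * r ^ 3 + s ^ 4 * r ^ 2
        = s ^ 2 * r ^ 2 * (s ^ 2 + a * t + r * s) := by ring
    rw [h]
    exact mul_ne_zero (mul_ne_zero (pow_ne_zero 2 hs) (pow_ne_zero 2 hr)) hX'
  have hX'' : s ^ 2 + a * t + s * r ≠ 0 := by
    intro h; apply hX'; linarith
  field_simp
  ring_nf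

lemma phi_cont15 (a b s : ℝ) (hs : 0 < s) :
    Filter.Tendsto (fun t : ℝ => (b * s ^ 2 - a ^ 2) *
        ((2 * s ^ 4)⁻¹ - (s ^ 2 * (s ^ 2 + 2 * a * t + b * t ^ 2) *
          ((s ^ 2 + a * t) / (Real.sqrt (s ^ 2 + 2 * a * t + b * t ^ 2) * s) + 1))⁻¹))
      (nhds 0) (nhds 0) := by
  have hs0 : s ≠ 0 := hs.ne'
  have h1 : ContinuousAt (fun t : ℝ => s ^ 2 + 2 * a * t + b * t ^ 2) 0 := by fun_prop
  have h2 : ContinuousAt (fun t : ℝ => Real.sqrt (s ^ 2 + 2 * a * t + b * t ^ 2) * s) 0 :=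
    (Real.continuous_sqrt.continuousAt.comp h1).mul continuousAt_const
  have h2val : Real.sqrt (s ^ 2 + 2 * a * (0:ℝ) + b * 0 ^ 2) * s = s ^ 2 := by
    simp [Real.sqrt_sq hs.le]; ring
  have h3 : ContinuousAt (fun t : ℝ =>
      (s ^ 2 + a * t) / (Real.sqrt (s ^ 2 + 2 * a * t + b * t ^ 2) * s) + 1) 0 := by
    apply ContinuousAt.add _ continuousAt_const
    apply ContinuousAt.div (by fun_prop) h2
    rw [h2val]; positivity
  have h3val : (s ^ 2 + a * (0:ℝ)) / (Real.sqrt (s ^ 2 + 2 * a * (0:ℝ) + b * (0:ℝ) ^ 2) * s) + 1 = 2 := by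
    rw [h2val]; field_simp; norm_num; ring
  have h4 : ContinuousAt (fun t : ℝ => s ^ 2 * (s ^ 2 + 2 * a * t + b * t ^ 2) *
      ((s ^ 2 + a * t) / (Real.sqrt (s ^ 2 + 2 * a * t + b * t ^ 2) * s) + 1)) 0 :=
    (continuousAt_const.mul h1).mul h3
  have h4val : s ^ 2 * (s ^ 2 + 2 * a * (0:ℝ) + b * (0:ℝ) ^ 2) *
      ((s ^ 2 + a * (0:ℝ)) / (Real.sqrt (s ^ 2 + 2 * a * (0:ℝ) + b * (0:ℝ) ^ 2) * s) + 1)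
      = 2 * s ^ 4 := by
    rw [h3val]; ring
  have h5 : ContinuousAt (fun t : ℝ => (b * s ^ 2 - a ^ 2) *
        ((2 * s ^ 4)⁻¹ - (s ^ 2 * (s ^ 2 + 2 * a * t + b * t ^ 2) *
          ((s ^ 2 + a * t) / (Real.sqrt (s ^ 2 + 2 * a * t + b * t ^ 2) * s) + 1))⁻¹)) 0 := by
    apply continuousAt_const.mul
    apply ContinuousAt.sub continuousAt_const
    apply ContinuousAt.inv₀ h4
    rw [h4val]; positivity
  have h6 := h5.tendsto
  convert h6 using 2
  simp only [h4val]
  ring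

lemma sqrt_inv_tendsto15 : Tendsto (fun n : ℝ => (Real.sqrt n)⁻¹) atTop (nhds 0) := by
  have h : Tendsto Real.sqrt atTop atTop := by
    apply tendsto_atTop_atTop.mpr
    intro bb
    refine ⟨(max bb 0) ^ 2, fun n hn => le_trans (le_max_left bb 0) ?_⟩
    rw [← Real.sqrt_sq (le_max_right bb 0)]
    exact Real.sqrt_le_sqrt hn
  exact h.inv_tendsto_atTop

theorem stmt15 {m : ℕ} (g Z : EuclideanSpace ℝ (Fin m)) (hg : g ≠ 0)
    (cosθ : ℝ) (hcos : cosθ = ⟪Z, g⟫ / (‖Z‖ * ‖g‖)) :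
    (fun n : ℝ =>
        ⟪‖g + (Real.sqrt n)⁻¹ • Z‖⁻¹ • (g + (Real.sqrt n)⁻¹ • Z), ‖g‖⁻¹ • g⟫
          - (1 - ‖Z‖ ^ 2 * (1 - cosθ ^ 2) / (2 * n * ‖g‖ ^ 2)))
      =o[atTop] (fun n : ℝ => 1 / n) := by
  set s : ℝ := ‖g‖ with hs_def
  have hs : 0 < s := norm_pos_iff.mpr hg
  set a : ℝ := ⟪Z, g⟫ with ha_def
  set b : ℝ := ‖Z‖ ^ 2 with hb_def
  have hkey : ‖Z‖ ^ 2 * (1 - cosθ ^ 2) = (b * s ^ 2 - a ^ 2) / s ^ 2 := by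
    by_cases hZ : Z = 0
    · simp [hZ, hb_def, ha_def, hcos]
    · have hZ0 : ‖Z‖ ≠ 0 := norm_ne_zero_iff.mpr hZ
      rw [hcos, hb_def, ha_def]
      field_simp
  set E : ℝ → ℝ := fun n => (b * s ^ 2 - a ^ 2) *
        ((2 * s ^ 4)⁻¹ - (s ^ 2 * (s ^ 2 + 2 * a * (Real.sqrt n)⁻¹ + b * ((Real.sqrt n)⁻¹) ^ 2) *
          ((s ^ 2 + a * (Real.sqrt n)⁻¹) /
            (Real.sqrt (s ^ 2 + 2 * a * (Real.sqrt n)⁻¹ + b * ((Real.sqrt n)⁻¹) ^ 2) * s) + 1))⁻¹)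
    with hE_def
  have hEo : E =o[atTop] (fun _ : ℝ => (1:ℝ)) := by
    rw [Asymptotics.isLittleO_one_iff]
    exact (phi_cont15 a b s hs).comp sqrt_inv_tendsto15
  have hmain : (fun n : ℝ =>
        ⟪‖g + (Real.sqrt n)⁻¹ • Z‖⁻¹ • (g + (Real.sqrt n)⁻¹ • Z), ‖g‖⁻¹ • g⟫
          - (1 - ‖Z‖ ^ 2 * (1 - cosθ ^ 2) / (2 * n * ‖g‖ ^ 2)))
      =ᶠ[atTop] (fun n : ℝ => 1 / n * E n) := by
    filter_upwards [eventually_ge_atTop (max 1 ((‖Z‖ / s + 1) ^ 2))] with n hn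
    have hn1 : (1:ℝ) ≤ n := le_trans (le_max_left _ _) hn
    have hn0 : 0 < n := lt_of_lt_of_le one_pos hn1
    have hsqn : ‖Z‖ / s + 1 ≤ Real.sqrt n := by
      have h1 : 0 ≤ ‖Z‖ / s + 1 := by positivity
      have h2 := Real.sqrt_le_sqrt (le_trans (le_max_right 1 ((‖Z‖ / s + 1) ^ 2)) hn)
      rwa [Real.sqrt_sq h1] at h2
    have hsqnpos : 0 < Real.sqrt n := Real.sqrt_pos.mpr hn0
    set t : ℝ := (Real.sqrt n)⁻¹ with ht_def
    have ht0 : 0 < t := inv_pos.mpr hsqnpos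
    have ht2 : t ^ 2 = 1 / n := by
      rw [ht_def, inv_pow, Real.sq_sqrt hn0.le, one_div]
    have htZ : t * ‖Z‖ < s := by
      rw [ht_def, inv_mul_lt_iff₀ hsqnpos]
      have h3 : (‖Z‖ / s + 1) * s ≤ Real.sqrt n * s := mul_le_mul_of_nonneg_right hsqn hs.le
      have h4 : (‖Z‖ / s + 1) * s = ‖Z‖ + s := by field_simp
      linarith
    have haCS : |a| ≤ ‖Z‖ * s := abs_real_inner_le_norm Z g
    have hnum : 0 < s ^ 2 + a * t := by
      nlinarith [abs_le.mp haCS]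
    have hG2 : ‖g + t • Z‖ ^ 2 = s ^ 2 + 2 * a * t + b * t ^ 2 := by
      rw [norm_add_sq_real, real_inner_smul_right, norm_smul, ha_def, hb_def, hs_def,
        real_inner_comm Z g, Real.norm_eq_abs, abs_of_pos ht0]
      ring
    have hGpos : 0 < ‖g + t • Z‖ := by
      have h2 : 0 < ‖g + t • Z‖ ^ 2 := by
        rw [hG2, hb_def]
        nlinarith [abs_le.mp haCS, sq_nonneg (s - t * ‖Z‖)]
      nlinarith [norm_nonneg (g + t • Z)]
    set r : ℝ := ‖g + t • Z‖ with hr_def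
    have hr0 : r ≠ 0 := hGpos.ne'
    have hrs : Real.sqrt (s ^ 2 + 2 * a * t + b * t ^ 2) = r := by
      rw [← hG2, Real.sqrt_sq (norm_nonneg _)]
    have hinner : ⟪r⁻¹ • (g + t • Z), s⁻¹ • g⟫ = (s ^ 2 + a * t) / (r * s) := by
      rw [real_inner_smul_left, real_inner_smul_right, inner_add_left, real_inner_smul_left,
        ← ha_def, real_inner_self_eq_norm_sq, ← hs_def]
      field_simp
    have hX : (s ^ 2 + a * t) / (r * s) + 1 ≠ 0 := by
      have h : 0 < (s ^ 2 + a * t) / (r * s) := div_pos hnum (by positivity)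
      positivity
    have hn_eq : n = (t ^ 2)⁻¹ := by
      rw [ht2]; field_simp
    rw [hinner, hkey]
    simp only [hE_def]
    rw [← ht_def, hrs, ← hG2, hn_eq, one_div, inv_inv]
    exact alg15 a b s r t hs.ne' ht0.ne' hr0 hG2 hX
  refine Asymptotics.IsLittleO.congr' ?_ hmain.symm (EventuallyEq.refl _ _)
  have h := (Asymptotics.isBigO_refl (fun n : ℝ => 1 / n) atTop).mul_isLittleO hEo
  simpa using h
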